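/- Let Λ be a finite nonzero Borel measure on [0,1] with Λ({0}) = 0 and m_{-2} := ∫_{[0,1]} x^{-2} Λ(dx) < ∞. Then there exists a nondecreasing function φ: [1,∞) → [0,∞), slowly varying at ∞, such that lim_{x→∞} φ(x) = ∞ and ∫_{(0,1]} y^{-2} φ(1/y) Λ(dy) < ∞. -/

import Mathlib

open MeasureTheory Filter Topology
open scoped ENNReal

noncomputable section

/-- `m_{-2} = ∫_{[0,1]} x^{-2} Λ(dx)`. -/
def mm2 (Λ : Measure ℝ) : ℝ≥0∞ :=
  ∫⁻ x in Set.Icc (0:ℝ) 1, ENNReal.ofReal (x⁻¹ ^ 2) ∂Λ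

/-- **Corollary 2.3**: if `Λ` is a finite nonzero Borel measure on `[0,1]` with `Λ({0}) = 0`
and `m_{-2} = ∫ x^{-2} Λ(dx) < ∞`, then there is a nondecreasing function
`φ : [1,∞) → [0,∞)`, slowly varying at `∞`, with `lim_{x→∞} φ(x) = ∞` and
`∫_{(0,1]} y^{-2} φ(1/y) Λ(dy) < ∞`. -/
theorem exists_slowly_varying_integrable_against_Lambda
    (Λ : Measure ℝ) [IsFiniteMeasure Λ] (hΛne : Λ ≠ 0)
    (hΛsupp : Λ (Set.Icc (0:ℝ) 1)ᶜ = 0) (hΛ0 : Λ {0} = 0)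
    (hm2 : mm2 Λ < ∞) :
    ∃ φ : ℝ → ℝ,
      MonotoneOn φ (Set.Ici 1) ∧
      (∀ x : ℝ, 1 ≤ x → 0 ≤ φ x) ∧
      (∀ c : ℝ, 0 < c → Tendsto (fun x => φ (c * x) / φ x) atTop (𝓝 1)) ∧
      Tendsto φ atTop atTop ∧
      (∫⁻ y in Set.Ioc (0:ℝ) 1, ENNReal.ofReal (y⁻¹ ^ 2 * φ y⁻¹) ∂Λ) < ∞ := by
  -- the density measure
  have hdens : Measurable fun y : ℝ => ENNReal.ofReal (y⁻¹ ^ 2) :=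
    ((measurable_inv.pow_const 2)).ennreal_ofReal
  set μ : Measure ℝ := Λ.withDensity (fun y => ENNReal.ofReal (y⁻¹ ^ 2)) with hμdef
  have hμapp : ∀ s : Set ℝ, MeasurableSet s →
      μ s = ∫⁻ y in s, ENNReal.ofReal (y⁻¹ ^ 2) ∂Λ := fun s hs =>
    withDensity_apply _ hs
  have hμfin : μ (Set.Ioc 0 1) < ∞ := by
    rw [hμapp _ measurableSet_Ioc]
    exact lt_of_le_of_lt (lintegral_mono_set Set.Ioc_subset_Icc_self) hm2
  -- the tail tends to 0
  have htail : Tendsto (fun k : ℕ => μ (Set.Ioc 0 (1 / (k + 1 : ℝ)))) atTop (𝓝 0) := by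
    have h0 : (⋂ k : ℕ, Set.Ioc (0:ℝ) (1 / (k + 1 : ℝ))) = ∅ := by
      ext y
      simp only [Set.mem_iInter, Set.mem_Ioc, Set.mem_empty_iff_false, iff_false, not_forall,
        not_and, not_le]
      by_cases hy0 : 0 < y
      · obtain ⟨k, hk⟩ := exists_nat_gt (1 / y)
        refine ⟨k, fun _ => ?_⟩
        have h1 : 1 / y < (k:ℝ) + 1 := hk.trans_le (by linarith)
        rw [div_lt_iff₀ (by positivity)]
        rw [div_lt_iff₀ hy0] at h1
        linarith
      · exact ⟨0, fun h' => absurd h' hy0⟩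
    have := tendsto_measure_iInter_atTop (μ := μ)
      (s := fun k : ℕ => Set.Ioc (0:ℝ) (1 / (k + 1 : ℝ)))
      (fun k => measurableSet_Ioc.nullMeasurableSet)
      (fun i j hij => Set.Ioc_subset_Ioc le_rfl (by
        apply one_div_le_one_div_of_le (by positivity)
        exact_mod_cast by exact_mod_cast Nat.add_le_add_right hij 1))
      ⟨0, by simpa using hμfin.ne⟩
    rw [h0] at this
    rw [measure_empty] at this; exact this
  -- choose cut points
  have hchoice : ∀ n : ℕ, ∃ k : ℕ, μ (Set.Ioc 0 (1 / (k + 1 : ℝ))) ≤ 2⁻¹ ^ n := by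
    intro n
    have hpos : (0:ℝ≥0∞) < 2⁻¹ ^ n := ENNReal.pow_pos (by simp) n
    obtain ⟨k, hk⟩ := (htail.eventually (ge_mem_nhds hpos)).exists
    exact ⟨k, hk⟩
  choose K hK using hchoice
  -- the sequence t
  set t : ℕ → ℝ := fun n => Nat.rec (max 2 (K 0 + 1)) (fun n tn => max (tn ^ 2) (K (n+1) + 1)) n
    with htdef
  have ht2 : ∀ n, (2:ℝ) ≤ t n := by
    intro n
    induction n with
    | zero => exact le_max_left _ _
    | succ n ih => exact le_trans (by nlinarith) (le_max_left _ _)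
  have htsq : ∀ n, t n ^ 2 ≤ t (n + 1) := fun n => le_max_left _ _
  have htK : ∀ n, (K n : ℝ) + 1 ≤ t n := by
    intro n
    cases n with
    | zero => exact le_max_right _ _
    | succ n => exact le_max_right _ _
  have htmono : Monotone t := by
    apply monotone_nat_of_le_succ
    intro n
    have h2 := ht2 n
    exact le_trans (by nlinarith) (htsq n)
  have htlin : ∀ n : ℕ, (n:ℝ) + 2 ≤ t n := by
    intro n
    induction n with
    | zero => simpa using ht2 0
    | succ n ih =>
      have h2 := ht2 n
      have : 2 * t n ≤ t n ^ 2 := by nlinarith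
      push_cast
      nlinarith [htsq n]
  have httop : Tendsto t atTop atTop :=
    tendsto_atTop_mono htlin (by
      have : Tendsto (fun n : ℕ => (n:ℝ)) atTop atTop := tendsto_natCast_atTop_atTop
      exact this.atTop_add tendsto_const_nhds)
  have htpos : ∀ n, (0:ℝ) < t n := fun n => lt_of_lt_of_le two_pos (ht2 n)
  -- tail bound for t
  have htailt : ∀ n, μ (Set.Ioc 0 (1 / t n)) ≤ 2⁻¹ ^ n := by
    intro n
    refine le_trans (measure_mono (Set.Ioc_subset_Ioc le_rfl ?_)) (hK n)
    exact one_div_le_one_div_of_le (by positivity) (htK n)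
  -- the counting function
  have hne : ∀ x : ℝ, {n : ℕ | x < t n}.Nonempty := by
    intro x
    obtain ⟨n, hn⟩ := (httop.eventually (eventually_gt_atTop x)).exists
    exact ⟨n, hn⟩
  set S : ℝ → ℕ := fun x => sInf {n : ℕ | x < t n} with hSdef
  have hSspec : ∀ x, x < t (S x) := fun x => Nat.sInf_mem (hne x)
  have hSle : ∀ x n, x < t n → S x ≤ n := fun x n h => Nat.sInf_le h
  have hSgt : ∀ x n, t n ≤ x → n < S x := by
    intro x n h
    by_contra hc
    push_neg at hc
    exact absurd (lt_of_le_of_lt h (lt_of_lt_of_le (hSspec x) (htmono hc))) (lt_irrefl _)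
  have hSmono : Monotone S := by
    intro x y hxy
    exact Nat.sInf_le (Set.mem_setOf.mpr (lt_of_le_of_lt hxy (hSspec y)))
  set φ : ℝ → ℝ := fun x => (S x : ℝ) with hφdef
  have hφtop : Tendsto φ atTop atTop := by
    apply tendsto_atTop_atTop.mpr
    intro b
    obtain ⟨n, hn⟩ := exists_nat_ge b
    refine ⟨t n, fun a ha => ?_⟩
    have := hSgt a n ha
    calc b ≤ (n:ℝ) := hn
      _ ≤ (S a : ℝ) := by exact_mod_cast this.le
  -- gap lemma
  have hgap : ∀ c' : ℝ, 1 ≤ c' → ∀ M : ℕ, c' ≤ t M →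
      ∀ a b : ℝ, t M ≤ a → a ≤ b → b ≤ c' * a → S b ≤ S a + 1 := by
    intro c' hc' M hM a b hMa hab hbc
    have hka : a < t (S a) := hSspec a
    have hMk : M ≤ S a := by
      by_contra hc
      push_neg at hc
      exact absurd (lt_of_le_of_lt hMa hka) (not_lt.mpr (htmono hc.le))
    have hck : c' ≤ t (S a) := le_trans hM (htmono hMk)
    have hb : b < t (S a + 1) := by
      have h1 : b ≤ c' * a := hbc
      have h2 : c' * a < c' * t (S a) := by
        apply mul_lt_mul_of_pos_left hka (lt_of_lt_of_le one_pos hc')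
      have h3 : c' * t (S a) ≤ t (S a) ^ 2 := by nlinarith [htpos (S a)]
      linarith [htsq (S a)]
    exact hSle b _ hb
  refine ⟨φ, ?_, ?_, ?_, hφtop, ?_⟩
  · exact fun x _ y _ hxy => Nat.cast_le.mpr (hSmono hxy)
  · exact fun x _ => Nat.cast_nonneg _
  · -- slowly varying
    intro c hc
    have hc'1 : (1:ℝ) ≤ max c c⁻¹ := by
      rcases le_total 1 c with h | h
      · exact le_max_of_le_left h
      · exact le_max_of_le_right (one_le_inv₀ hc |>.mpr h)
    set c' : ℝ := max c c⁻¹ with hc'def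
    obtain ⟨M, hM⟩ := (httop.eventually (eventually_ge_atTop c')).exists
    -- key: eventually |S(cx) - S x| ≤ 1
    have hkey : ∀ x : ℝ, max (t M) (t M / c) ≤ x →
        S (c * x) ≤ S x + 1 ∧ S x ≤ S (c * x) + 1 := by
      intro x hx
      have hxM : t M ≤ x := le_trans (le_max_left _ _) hx
      have hcxM : t M ≤ c * x := by
        have : t M / c ≤ x := le_trans (le_max_right _ _) hx
        calc t M = c * (t M / c) := by field_simp
          _ ≤ c * x := by exact mul_le_mul_of_nonneg_left this hc.le
      rcases le_total x (c * x) with hor | hor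
      · have h1 : c * x ≤ c' * x := by
          apply mul_le_mul_of_nonneg_right (le_max_left _ _)
          linarith [htpos M]
        have := hgap c' hc'1 M hM x (c * x) hxM hor h1
        exact ⟨this, le_trans (hSmono hor) (Nat.le_succ _)⟩
      · have h1 : x ≤ c' * (c * x) := by
          have hcx0 : 0 < c * x := lt_of_lt_of_le (htpos M) hcxM
          have h2 : c⁻¹ ≤ c' := le_max_right _ _
          calc x = c⁻¹ * (c * x) := by field_simp
            _ ≤ c' * (c * x) := mul_le_mul_of_nonneg_right h2 hcx0.le
        have := hgap c' hc'1 M hM (c * x) x hcxM hor h1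
        exact ⟨le_trans (hSmono hor) (Nat.le_succ _), this⟩
    -- squeeze
    have hφpos : ∀ᶠ x in atTop, (1:ℝ) ≤ φ x := hφtop.eventually (eventually_ge_atTop 1)
    have hbig : ∀ᶠ x in atTop, max (t M) (t M / c) ≤ x := eventually_ge_atTop _
    have hinv : Tendsto (fun x => 1 / φ x) atTop (𝓝 0) := by
      have h := hφtop.inv_tendsto_atTop; simp only [one_div]; exact h
    have hlow : Tendsto (fun x => 1 - 1 / φ x) atTop (𝓝 1) := by
      simpa using tendsto_const_nhds.sub hinv
    have hhigh : Tendsto (fun x => 1 + 1 / φ x) atTop (𝓝 1) := by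
      simpa using tendsto_const_nhds.add hinv
    refine tendsto_of_tendsto_of_tendsto_of_le_of_le' hlow hhigh ?_ ?_
    · filter_upwards [hφpos, hbig] with x h1 h2
      have hk := (hkey x h2).2
      have hφx : 0 < φ x := lt_of_lt_of_le one_pos h1
      have hnum : φ x - 1 ≤ φ (c * x) := by
        have : (S x : ℝ) ≤ (S (c * x) : ℝ) + 1 := by exact_mod_cast hk
        simp only [hφdef]; linarith
      calc 1 - 1 / φ x = (φ x - 1) / φ x := by field_simp
        _ ≤ φ (c * x) / φ x := by gcongr
    · filter_upwards [hφpos, hbig] with x h1 h2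
      have hk := (hkey x h2).1
      have hφx : 0 < φ x := lt_of_lt_of_le one_pos h1
      have hnum : φ (c * x) ≤ φ x + 1 := by
        have : (S (c * x) : ℝ) ≤ (S x : ℝ) + 1 := by exact_mod_cast hk
        simp only [hφdef]; linarith
      calc φ (c * x) / φ x ≤ (φ x + 1) / φ x := by gcongr
        _ = 1 + 1 / φ x := by field_simp
  · -- integral
    set A : ℕ → Set ℝ := fun n =>
      Nat.casesOn n (Set.Ioc (1 / t 0) 1) (fun m => Set.Ioc (1 / t (m+1)) (1 / t m)) with hAdef
    have hAmeas : ∀ n, MeasurableSet (A n) := by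
      intro n; cases n <;> exact measurableSet_Ioc
    have hcover : Set.Ioc (0:ℝ) 1 ⊆ ⋃ n, A n := by
      intro y hy
      have hy0 : 0 < y := hy.1
      by_cases h0 : 1 / t 0 < y
      · exact Set.mem_iUnion.mpr ⟨0, ⟨h0, hy.2⟩⟩
      · have hne2 : {n : ℕ | 1 / t n < y}.Nonempty := by
          obtain ⟨n, hn⟩ := (httop.eventually (eventually_gt_atTop (1/y))).exists
          refine ⟨n, ?_⟩
          rw [Set.mem_setOf_eq, div_lt_iff₀ (htpos n)]
          rw [div_lt_iff₀ hy0] at hn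
          linarith
        have hm := Nat.sInf_mem hne2
        have hmne : sInf {n : ℕ | 1 / t n < y} ≠ 0 := by
          intro h
          rw [h] at hm
          exact h0 hm
        obtain ⟨k, hk⟩ := Nat.exists_eq_succ_of_ne_zero hmne
        rw [hk] at hm
        have h2 : ¬ (1 / t k < y) :=
          Nat.notMem_of_lt_sInf (by rw [hk]; exact Nat.lt_succ_self k)
        exact Set.mem_iUnion.mpr ⟨k+1, ⟨hm, not_lt.mp h2⟩⟩
    have hSsmall : ∀ (n : ℕ) (y : ℝ), 0 < y → 1 / t n < y → S y⁻¹ ≤ n := by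
      intro n y hy0 h
      apply hSle
      rw [inv_lt_comm₀ hy0 (htpos n)]
      rwa [one_div] at h
    have hbound : ∀ n : ℕ,
        (∫⁻ y in A n, ENNReal.ofReal (y⁻¹ ^ 2 * φ y⁻¹) ∂Λ) ≤ 2 * (n:ℝ≥0∞) * 2⁻¹ ^ n := by
      intro n
      cases n with
      | zero =>
        have hz : ∀ y ∈ A 0, ENNReal.ofReal (y⁻¹ ^ 2 * φ y⁻¹) = (0:ℝ≥0∞) := by
          intro y hy
          have hy0 : 0 < y := lt_trans (one_div_pos.mpr (htpos 0)) hy.1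
          have hS0 : S y⁻¹ = 0 := Nat.le_zero.mp (hSsmall 0 y hy0 hy.1)
          simp [hφdef, hS0]
        rw [setLIntegral_congr_fun (hAmeas 0) hz]
        simp
      | succ n =>
        have htp : (0:ℝ) < 1 / t (n+1) := one_div_pos.mpr (htpos (n+1))
        have hstep : ∀ y ∈ A (n+1), ENNReal.ofReal (y⁻¹ ^ 2 * φ y⁻¹) ≤
            ((n:ℝ≥0∞) + 1) * ENNReal.ofReal (y⁻¹ ^ 2) := by
          intro y hy
          have hy0 : 0 < y := lt_trans htp hy.1
          have hS : (S y⁻¹ : ℝ) ≤ (n:ℝ) + 1 := by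
            exact_mod_cast hSsmall (n+1) y hy0 hy.1
          calc ENNReal.ofReal (y⁻¹ ^ 2 * φ y⁻¹)
              ≤ ENNReal.ofReal (((n:ℝ) + 1) * (y⁻¹ ^ 2)) := by
                apply ENNReal.ofReal_le_ofReal
                rw [mul_comm]
                exact mul_le_mul_of_nonneg_right hS (by positivity)
            _ = ((n:ℝ≥0∞) + 1) * ENNReal.ofReal (y⁻¹ ^ 2) := by
                rw [ENNReal.ofReal_mul (by positivity)]
                congr 1
                rw [ENNReal.ofReal_add (Nat.cast_nonneg n) zero_le_one]
                simp
        calc (∫⁻ y in A (n+1), ENNReal.ofReal (y⁻¹ ^ 2 * φ y⁻¹) ∂Λ)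
            ≤ ∫⁻ y in A (n+1), ((n:ℝ≥0∞) + 1) * ENNReal.ofReal (y⁻¹ ^ 2) ∂Λ :=
              setLIntegral_mono' measurableSet_Ioc hstep
          _ = ((n:ℝ≥0∞) + 1) * ∫⁻ y in A (n+1), ENNReal.ofReal (y⁻¹ ^ 2) ∂Λ :=
              lintegral_const_mul _ hdens
          _ ≤ ((n:ℝ≥0∞) + 1) * μ (Set.Ioc 0 (1 / t n)) := by
              apply mul_le_mul_right
              rw [hμapp _ measurableSet_Ioc]
              apply lintegral_mono_set
              exact Set.Ioc_subset_Ioc_left htp.le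
          _ ≤ ((n:ℝ≥0∞) + 1) * 2⁻¹ ^ n := mul_le_mul_right (htailt n) _
          _ = 2 * ((n:ℝ≥0∞) + 1) * 2⁻¹ ^ (n+1) := by
              rw [pow_succ, ← mul_assoc,
                show (2:ℝ≥0∞) * ((n:ℝ≥0∞) + 1) * 2⁻¹ ^ n * 2⁻¹
                  = ((n:ℝ≥0∞) + 1) * 2⁻¹ ^ n * (2 * 2⁻¹) by ring,
                ENNReal.mul_inv_cancel (by norm_num) (by norm_num), mul_one]
          _ = 2 * ((n+1 : ℕ):ℝ≥0∞) * 2⁻¹ ^ (n+1) := by push_cast; ring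
    have hsum : (∑' n : ℕ, 2 * (n:ℝ≥0∞) * 2⁻¹ ^ n) < ∞ := by
      have hsummable : Summable (fun n : ℕ => (n:ℝ) * (2⁻¹:ℝ) ^ n) := by
        simpa using summable_pow_mul_geometric_of_norm_lt_one 1 (r := (2⁻¹:ℝ)) (by
          rw [Real.norm_eq_abs, abs_of_pos (by norm_num)]; norm_num)
      have heq : ∀ n : ℕ, (n:ℝ≥0∞) * 2⁻¹ ^ n = ENNReal.ofReal ((n:ℝ) * (2⁻¹:ℝ) ^ n) := by
        intro n
        rw [ENNReal.ofReal_mul (Nat.cast_nonneg n), ENNReal.ofReal_pow (by norm_num),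
          ENNReal.ofReal_natCast]
        congr 1
        rw [ENNReal.ofReal_inv_of_pos (by norm_num)]
        norm_num
      calc (∑' n : ℕ, 2 * (n:ℝ≥0∞) * 2⁻¹ ^ n)
          = 2 * ∑' n : ℕ, (n:ℝ≥0∞) * 2⁻¹ ^ n := by
            rw [← ENNReal.tsum_mul_left]
            congr 1; ext n; ring
        _ = 2 * ∑' n : ℕ, ENNReal.ofReal ((n:ℝ) * (2⁻¹:ℝ) ^ n) := by
            congr 1; exact tsum_congr heq
        _ = 2 * ENNReal.ofReal (∑' n : ℕ, (n:ℝ) * (2⁻¹:ℝ) ^ n) := by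
            rw [ENNReal.ofReal_tsum_of_nonneg (fun n => by positivity) hsummable]
        _ < ∞ := by
            apply ENNReal.mul_lt_top (by norm_num) ENNReal.ofReal_lt_top
    calc (∫⁻ y in Set.Ioc (0:ℝ) 1, ENNReal.ofReal (y⁻¹ ^ 2 * φ y⁻¹) ∂Λ)
        ≤ ∫⁻ y in ⋃ n, A n, ENNReal.ofReal (y⁻¹ ^ 2 * φ y⁻¹) ∂Λ := lintegral_mono_set hcover
      _ ≤ ∑' n : ℕ, ∫⁻ y in A n, ENNReal.ofReal (y⁻¹ ^ 2 * φ y⁻¹) ∂Λ := lintegral_iUnion_le _ _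
      _ ≤ ∑' n : ℕ, 2 * (n:ℝ≥0∞) * 2⁻¹ ^ n := ENNReal.tsum_le_tsum hbound
      _ < ∞ := hsum
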